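/- arXiv:2001.03403 — 2 statements merged into one kernel-verified Lean document; each statement's English description precedes it below -/
import Mathlib

section
/- Let σ² > 0, ϑ₂ > 0 and Γ < 0 with −π² < Γ; set Γ₀ = √(−Γ) (so 0 < Γ₀ < π) and λ_ℓ = ϑ₂ (π² ℓ² − Γ₀²) for positive integers ℓ (so λ_ℓ > 0 for all ℓ ≥ 1). Then for all real numbers x, y with 0 ≤ x ≤ y ≤ 1, the series identity ∑_{ℓ=1}^{∞} (σ²/λ_ℓ) · sin(π ℓ x) · sin(π ℓ y) = (σ²/(2ϑ₂)) · sin(Γ₀ x) · sin(Γ₀ (1 − y)) / (Γ₀ · sin(Γ₀)) holds, where the series converges absolutely. -/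
open Real

open Complex

lemma green_coeff (a : ℝ) (ha : 0 < a) (ha' : a < π) (n : ℤ) :
    ∫ s in (0:ℝ)..2, Complex.exp (-(π * n * Complex.I) * s) * ((Real.cos (a * (1 - s)) : ℝ) : ℂ)
      = ((2 * a * Real.sin a / (a ^ 2 - π ^ 2 * n ^ 2) : ℝ) : ℂ) := by
  have hπ := Real.pi_pos
  have hap : a + π * (n : ℝ) ≠ 0 := by
    rcases le_or_gt 0 n with h | h
    · have h0 : (0:ℝ) ≤ (n:ℝ) := by exact_mod_cast h
      positivity
    · have h1 : (n:ℝ) ≤ -1 := by exact_mod_cast Int.le_sub_one_of_lt h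
      nlinarith
  have ham : a - π * (n : ℝ) ≠ 0 := by
    rcases le_or_gt n 0 with h | h
    · have h0 : (n:ℝ) ≤ 0 := by exact_mod_cast h
      nlinarith
    · have h1 : (1:ℝ) ≤ (n:ℝ) := by exact_mod_cast h
      nlinarith
  have hapC : ((a : ℂ) + π * n) ≠ 0 := by
    have := Complex.ofReal_ne_zero.mpr hap; push_cast at this; exact this
  have hamC : ((a : ℂ) - π * n) ≠ 0 := by
    have := Complex.ofReal_ne_zero.mpr ham; push_cast at this; exact this
  set d1 : ℂ := -(((a : ℂ) + π * n) * Complex.I) with hd1def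
  set d2 : ℂ := ((a : ℂ) - π * n) * Complex.I with hd2def
  have hd1 : d1 ≠ 0 := by simp [hd1def, hapC, Complex.I_ne_zero]
  have hd2 : d2 ≠ 0 := by simp [hd2def, hamC, Complex.I_ne_zero]
  set c1 : ℂ := Complex.exp ((a : ℂ) * Complex.I) / 2 with hc1def
  set c2 : ℂ := Complex.exp (-(a : ℂ) * Complex.I) / 2 with hc2def
  have hcos : ∀ z : ℂ, Complex.cos z = (Complex.exp (z * Complex.I) + Complex.exp (-z * Complex.I)) / 2 := by
    intro z
    have := Complex.two_cos z
    linear_combination this / 2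
  have hhalf : ∀ u v : ℂ, u = v → Complex.exp u / 2 = Complex.exp v / 2 := fun u v h => by rw [h]
  have hfun : ∀ s : ℝ,
      Complex.exp (-(π * n * Complex.I) * s) * ((Real.cos (a * (1 - s)) : ℝ) : ℂ)
        = c1 * Complex.exp (d1 * s) + c2 * Complex.exp (d2 * s) := by
    intro s
    rw [mul_comm, Complex.ofReal_cos,
      show ((a * (1 - s) : ℝ) : ℂ) = (a : ℂ) * (1 - s) by push_cast; ring,
      hcos, hc1def, hc2def, div_mul_eq_mul_div, add_mul,
      div_mul_eq_mul_div, div_mul_eq_mul_div, ← add_div,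
      ← Complex.exp_add, ← Complex.exp_add, ← Complex.exp_add, ← Complex.exp_add]
    have e1 : (a : ℂ) * (1 - s) * Complex.I + -(π * n * Complex.I) * s = (a:ℂ) * Complex.I + d1 * s := by
      rw [hd1def]; push_cast; ring
    have e2 : -((a : ℂ) * (1 - s)) * Complex.I + -(π * n * Complex.I) * s = -(a:ℂ) * Complex.I + d2 * s := by
      rw [hd2def]; push_cast; ring
    rw [e1, e2]
  calc ∫ s in (0:ℝ)..2, Complex.exp (-(π * n * Complex.I) * s) * ((Real.cos (a * (1 - s)) : ℝ) : ℂ)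
      = ∫ s in (0:ℝ)..2, (c1 * Complex.exp (d1 * s) + c2 * Complex.exp (d2 * s)) :=
        intervalIntegral.integral_congr (fun s _ => hfun s)
    _ = c1 * ((Complex.exp (d1 * 2) - 1) / d1) + c2 * ((Complex.exp (d2 * 2) - 1) / d2) := by
        rw [intervalIntegral.integral_add (Continuous.intervalIntegrable (by continuity) _ _) (Continuous.intervalIntegrable (by continuity) _ _),
          intervalIntegral.integral_const_mul, intervalIntegral.integral_const_mul,
          integral_exp_mul_complex hd1, integral_exp_mul_complex hd2]
        norm_num
    _ = ((2 * a * Real.sin a / (a ^ 2 - π ^ 2 * n ^ 2) : ℝ) : ℂ) := by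
        set E : ℂ := Complex.exp ((a:ℂ) * Complex.I) with hE
        have hEne : E ≠ 0 := Complex.exp_ne_zero _
        have he1 : Complex.exp (d1 * 2) = (E * E)⁻¹ := by
          rw [hd1def, show -(((a : ℂ) + π * n) * Complex.I) * 2
              = -((a:ℂ) * Complex.I + (a:ℂ) * Complex.I) + (-n : ℤ) * (2 * π * Complex.I) by push_cast; ring,
            Complex.exp_add, Complex.exp_int_mul_two_pi_mul_I, mul_one, Complex.exp_neg,
            Complex.exp_add, hE]
        have he2 : Complex.exp (d2 * 2) = E * E := by
          rw [hd2def, show (((a : ℂ) - π * n) * Complex.I) * 2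
              = ((a:ℂ) * Complex.I + (a:ℂ) * Complex.I) + (-n : ℤ) * (2 * π * Complex.I) by push_cast; ring,
            Complex.exp_add, Complex.exp_int_mul_two_pi_mul_I, mul_one, Complex.exp_add, hE]
        have hEm : Complex.exp (-(a:ℂ) * Complex.I) = E⁻¹ := by
          rw [hE, ← Complex.exp_neg]; ring_nf
        have hsin : Complex.sin (a:ℂ) = (E⁻¹ - E) * Complex.I / 2 := by
          have := Complex.two_sin (a:ℂ)
          rw [hEm.symm, hE.symm] at *
          linear_combination this / 2
        have hd1inv : d1⁻¹ = Complex.I / ((a:ℂ) + π * n) := by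
          rw [hd1def, inv_neg, mul_inv, Complex.inv_I]
          field_simp
        have hd2inv : d2⁻¹ = -(Complex.I / ((a:ℂ) - π * n)) := by
          rw [hd2def, mul_inv, Complex.inv_I]
          field_simp
        rw [he1, he2, div_eq_mul_inv, div_eq_mul_inv, hd1inv, hd2inv, hc1def, hc2def, hEm]
        rw [show ((2 * a * Real.sin a / (a ^ 2 - π ^ 2 * n ^ 2) : ℝ) : ℂ)
            = 2 * (a:ℂ) * Complex.sin (a:ℂ) / (((a:ℂ) + π * n) * ((a:ℂ) - π * n)) by
          push_cast [Complex.ofReal_sin]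
          congr 1
          ring]
        have t1 : E / 2 * (((E*E)⁻¹ - 1) * (Complex.I / ((a:ℂ) + π * n)))
            = Complex.sin (a:ℂ) / ((a:ℂ) + π * n) := by
          rw [hsin]; field_simp [hEne]
        have t2 : E⁻¹ / 2 * ((E*E - 1) * -(Complex.I / ((a:ℂ) - π * n)))
            = Complex.sin (a:ℂ) / ((a:ℂ) - π * n) := by
          rw [hsin]; field_simp [hEne]; ring
        rw [t1, t2, div_add_div _ _ hapC hamC,
          div_eq_div_iff (mul_ne_zero hapC hamC) (mul_ne_zero hapC hamC)]
        ring

lemma green_cos_hasSum_lt (a : ℝ) (ha : 0 < a) (ha' : a < π) (t : ℝ) (ht : 0 ≤ t) (ht' : t < 2) :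
    HasSum (fun ℓ : ℕ => Real.cos (π * (ℓ + 1 : ℕ) * t) / (π ^ 2 * ((ℓ + 1 : ℕ) : ℝ) ^ 2 - a ^ 2))
      (1 / (2 * a ^ 2) - Real.cos (a * (1 - t)) / (2 * a * Real.sin a)) := by
  haveI : Fact (0 < (2:ℝ)) := ⟨two_pos⟩
  have hπ := Real.pi_pos
  have hsa : 0 < Real.sin a := Real.sin_pos_of_pos_of_lt_pi ha ha'
  set g : ℝ → ℂ := fun s => ((Real.cos (a * (1 - s)) : ℝ) : ℂ) with hgdef
  have hg02 : g 0 = g 2 := by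
    simp only [hgdef]
    rw [show a * (1 - (0:ℝ)) = a by ring, show a * (1 - (2:ℝ)) = -a by ring, Real.cos_neg]
  have hgcont : Continuous g :=
    Complex.continuous_ofReal.comp (Real.continuous_cos.comp (by continuity))
  set F : C(AddCircle (2:ℝ), ℂ) :=
    ⟨AddCircle.liftIco 2 0 g, AddCircle.liftIco_zero_continuous hg02 hgcont.continuousOn⟩ with hFdef
  have hF : ∀ n : ℤ, fourierCoeff (⇑F) n = ((a * Real.sin a / (a ^ 2 - π ^ 2 * n ^ 2) : ℝ) : ℂ) := by
    intro n
    have h1 : fourierCoeff (⇑F) n = fourierCoeffOn (lt_add_of_pos_right 0 two_pos) g n :=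
      fourierCoeff_liftIco_eq (T := 2) g n
    rw [h1, fourierCoeffOn_eq_integral]
    have h2 : ∀ s : ℝ, s ∈ Set.uIcc (0:ℝ) (0 + 2) →
        (fourier (-n) ((s : ℝ) : AddCircle ((0:ℝ) + 2 - 0))) • g s
          = Complex.exp (-(π * n * Complex.I) * s) * ((Real.cos (a * (1 - s)) : ℝ) : ℂ) := by
      intro s _
      rw [smul_eq_mul, fourier_coe_apply]
      congr 2
      push_cast
      ring
    rw [intervalIntegral.integral_congr h2]
    rw [show (0:ℝ) + 2 = 2 by norm_num, green_coeff a ha ha' n]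
    rw [show (1/((2:ℝ) - 0)) = (1/2 : ℝ) by norm_num, Complex.real_smul, ← Complex.ofReal_mul]
    exact Complex.ofReal_inj.mpr (by ring)
  have hsummc : Summable (fourierCoeff (⇑F)) := by
    have hs : Summable (fun n : ℤ => ((a * Real.sin a / (a ^ 2 - π ^ 2 * n ^ 2) : ℝ) : ℂ)) := by
      rw [Complex.summable_ofReal]
      apply Summable.of_norm_bounded_eventually
        (g := fun n : ℤ => (a * Real.sin a / (π ^ 2 - a ^ 2)) * (1 / (n : ℝ) ^ 2))
        ((summable_one_div_int_pow.mpr one_lt_two).mul_left _)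
      have hsub : {n : ℤ | ¬ ‖a * Real.sin a / (a ^ 2 - π ^ 2 * n ^ 2)‖
          ≤ a * Real.sin a / (π ^ 2 - a ^ 2) * (1 / (n : ℝ) ^ 2)} ⊆ {0} := by
        intro n hn
        simp only [Set.mem_setOf_eq] at hn
        by_contra h0
        have hne : n ≠ 0 := by simpa using h0
        have h1 : (1:ℝ) ≤ (n : ℝ) ^ 2 := by
          rcases lt_or_gt_of_ne hne with h | h
          · have : (n:ℝ) ≤ -1 := by exact_mod_cast Int.le_sub_one_of_lt h
            nlinarith
          · have : (1:ℝ) ≤ (n:ℝ) := by exact_mod_cast h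
            nlinarith
        apply hn
        have hden : 0 < π ^ 2 * (n:ℝ) ^ 2 - a ^ 2 := by nlinarith
        have hpa : 0 < π ^ 2 - a ^ 2 := by nlinarith
        rw [Real.norm_eq_abs, abs_div, abs_of_pos (by positivity),
          abs_of_neg (by linarith : a ^ 2 - π ^ 2 * (n:ℝ) ^ 2 < 0), neg_sub, mul_one_div,
          div_le_div_iff₀ hden (by positivity : (0:ℝ) < (n:ℝ) ^ 2), div_mul_eq_mul_div,
          le_div_iff₀ hpa]
        nlinarith [mul_nonneg (mul_pos ha hsa).le
          (mul_nonneg (sq_nonneg a) (by linarith : (0:ℝ) ≤ (n:ℝ)^2 - 1))]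
      exact (Set.Finite.subset (Set.finite_singleton 0) hsub)
    exact (funext hF : fourierCoeff (⇑F) = _) ▸ hs
  have hpt := has_pointwise_sum_fourier_series_of_summable hsummc ((t : ℝ) : AddCircle (2:ℝ))
  have hFt : F ((t : ℝ) : AddCircle (2:ℝ)) = g t := by
    show AddCircle.liftIco 2 0 g _ = g t
    exact AddCircle.liftIco_zero_coe_apply (⟨ht, ht'⟩ : t ∈ Set.Ico (0:ℝ) 2)
  rw [hFt] at hpt
  have hs2 := hpt.nat_add_neg
  have hs3 := (hasSum_nat_add_iff' 1).mpr hs2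
  have hfun : (fun n : ℕ =>
        (fourierCoeff (⇑F) ((n + 1 : ℕ) : ℤ)) • fourier ((n + 1 : ℕ) : ℤ) ((t : ℝ) : AddCircle (2:ℝ))
        + (fourierCoeff (⇑F) (-((n + 1 : ℕ) : ℤ))) • fourier (-((n + 1 : ℕ) : ℤ)) ((t : ℝ) : AddCircle (2:ℝ)))
      = fun n : ℕ => ((2 * a * Real.sin a * Real.cos (π * (n + 1 : ℕ) * t)
          / (a ^ 2 - π ^ 2 * ((n + 1 : ℕ) : ℝ) ^ 2) : ℝ) : ℂ) := by
    funext n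
    rw [hF, hF]
    rw [show ((-((n + 1 : ℕ) : ℤ) : ℤ) : ℝ) ^ 2 = (((n + 1 : ℕ) : ℤ) : ℝ) ^ 2 by push_cast; ring]
    rw [smul_eq_mul, smul_eq_mul, ← mul_add, fourier_coe_apply, fourier_coe_apply]
    rw [show 2 * (π:ℂ) * Complex.I * (((n + 1 : ℕ) : ℤ) : ℂ) * (t:ℂ) / ((2:ℝ):ℂ)
        = ((π * (n + 1 : ℕ) * t : ℝ) : ℂ) * Complex.I by push_cast; ring]
    rw [show 2 * (π:ℂ) * Complex.I * ((-((n + 1 : ℕ) : ℤ) : ℤ) : ℂ) * (t:ℂ) / ((2:ℝ):ℂ)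
        = -((π * (n + 1 : ℕ) * t : ℝ) : ℂ) * Complex.I by push_cast; ring]
    rw [← Complex.two_cos, ← Complex.ofReal_cos]
    push_cast
    ring
  rw [hfun] at hs3
  have hs4 : HasSum (fun n : ℕ => ((2 * a * Real.sin a * Real.cos (π * (n + 1 : ℕ) * t)
          / (a ^ 2 - π ^ 2 * ((n + 1 : ℕ) : ℝ) ^ 2) : ℝ) : ℂ))
      ((Real.cos (a * (1 - t)) - Real.sin a / a : ℝ) : ℂ) := by
    convert hs3 using 1
    · rfl
    simp only [Finset.range_one, Finset.sum_singleton, Nat.cast_zero, neg_zero, fourier_zero,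
      smul_eq_mul, mul_one, hF, hgdef]
    have haC : (a:ℂ) ≠ 0 := Complex.ofReal_ne_zero.mpr ha.ne'
    push_cast
    field_simp
    ring
  have hr := Complex.hasSum_ofReal.mp hs4
  have final := hr.mul_left (-(1 / (2 * a * Real.sin a)))
  have hfun3 : (fun n : ℕ => -(1 / (2 * a * Real.sin a)) * (2 * a * Real.sin a
        * Real.cos (π * (n + 1 : ℕ) * t) / (a ^ 2 - π ^ 2 * ((n + 1 : ℕ) : ℝ) ^ 2)))
      = fun ℓ : ℕ => Real.cos (π * (ℓ + 1 : ℕ) * t) / (π ^ 2 * ((ℓ + 1 : ℕ) : ℝ) ^ 2 - a ^ 2) := by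
    funext n
    set k : ℝ := ((n + 1 : ℕ) : ℝ) with hkdef
    have hk1 : (1:ℝ) ≤ k := by
      rw [hkdef]; exact_mod_cast Nat.one_le_iff_ne_zero.mpr (Nat.succ_ne_zero n)
    have hk2 : (1:ℝ) ≤ k ^ 2 := by nlinarith
    have hπ := Real.pi_pos
    have hsa : 0 < Real.sin a := Real.sin_pos_of_pos_of_lt_pi ha ha'
    have hlt : a ^ 2 < π ^ 2 * k ^ 2 := by nlinarith [mul_le_mul_of_nonneg_left hk2 (sq_nonneg π)]
    have hD : π ^ 2 * k ^ 2 - a ^ 2 ≠ 0 := by linarith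
    have hD' : a ^ 2 - π ^ 2 * k ^ 2 ≠ 0 := by
      intro h; apply hD; linarith
    field_simp
    ring
  rw [hfun3] at final
  rw [show -(1 / (2 * a * Real.sin a)) * (Real.cos (a * (1 - t)) - Real.sin a / a)
      = 1 / (2 * a ^ 2) - Real.cos (a * (1 - t)) / (2 * a * Real.sin a) by
    field_simp
    ring] at final
  exact final

lemma green_cos_hasSum (a : ℝ) (ha : 0 < a) (ha' : a < π) (t : ℝ) (ht : 0 ≤ t) (ht' : t ≤ 2) :
    HasSum (fun ℓ : ℕ => Real.cos (π * (ℓ + 1 : ℕ) * t) / (π ^ 2 * ((ℓ + 1 : ℕ) : ℝ) ^ 2 - a ^ 2))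
      (1 / (2 * a ^ 2) - Real.cos (a * (1 - t)) / (2 * a * Real.sin a)) := by
  rcases lt_or_eq_of_le ht' with h | h
  · exact green_cos_hasSum_lt a ha ha' t ht h
  · subst h
    have h0 := green_cos_hasSum_lt a ha ha' 0 le_rfl two_pos
    have e1 : (fun ℓ : ℕ => Real.cos (π * (ℓ + 1 : ℕ) * (0:ℝ)) / (π ^ 2 * ((ℓ + 1 : ℕ) : ℝ) ^ 2 - a ^ 2))
        = fun ℓ : ℕ => Real.cos (π * (ℓ + 1 : ℕ) * (2:ℝ)) / (π ^ 2 * ((ℓ + 1 : ℕ) : ℝ) ^ 2 - a ^ 2) := by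
      funext ℓ
      rw [show π * ((ℓ + 1 : ℕ) : ℝ) * (2:ℝ) = ((ℓ + 1 : ℕ) : ℝ) * (2 * π) by ring,
        Real.cos_nat_mul_two_pi, mul_zero, Real.cos_zero]
    have e2 : Real.cos (a * (1 - (0:ℝ))) = Real.cos (a * (1 - (2:ℝ))) := by
      rw [show a * (1 - (0:ℝ)) = a by ring, show a * (1 - (2:ℝ)) = -a by ring, Real.cos_neg]
    rw [e1, e2] at h0
    exact h0


set_option maxHeartbeats 1000000

/-- Green's-function series identity in the case `−π² < Γ < 0`:
for `Γ₀ = √(−Γ)` (so `0 < Γ₀ < π`), `λ_ℓ = ϑ₂(π² ℓ² − Γ₀²)` and `0 ≤ x ≤ y ≤ 1`,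
`∑_{ℓ≥1} (σ²/λ_ℓ) sin(π ℓ x) sin(π ℓ y)
  = (σ²/(2ϑ₂)) sin(Γ₀ x) sin(Γ₀ (1 − y)) / (Γ₀ sin Γ₀)`,
with absolute convergence of the series. -/
theorem green_series_sin (σsq ϑ₂ Γ : ℝ) (hσ : 0 < σsq) (hϑ₂ : 0 < ϑ₂)
    (hΓneg : Γ < 0) (hΓlow : -π ^ 2 < Γ)
    (Γ₀ : ℝ) (hΓ₀ : Γ₀ = Real.sqrt (-Γ))
    (lam : ℕ → ℝ) (hlam : ∀ ℓ : ℕ, lam ℓ = ϑ₂ * (π ^ 2 * ℓ ^ 2 - Γ₀ ^ 2))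
    (x y : ℝ) (hx : 0 ≤ x) (hxy : x ≤ y) (hy : y ≤ 1) :
    Summable (fun ℓ : ℕ =>
      |σsq / lam (ℓ + 1) * Real.sin (π * (ℓ + 1) * x) * Real.sin (π * (ℓ + 1) * y)|) ∧
    (∑' ℓ : ℕ, σsq / lam (ℓ + 1) * Real.sin (π * (ℓ + 1) * x) * Real.sin (π * (ℓ + 1) * y))
      = σsq / (2 * ϑ₂) * (Real.sin (Γ₀ * x) * Real.sin (Γ₀ * (1 - y))
          / (Γ₀ * Real.sin Γ₀)) := by
  have hπ := Real.pi_pos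
  have ha : 0 < Γ₀ := by rw [hΓ₀]; exact Real.sqrt_pos.mpr (by linarith)
  have ha' : Γ₀ < π := by
    rw [hΓ₀]
    exact (Real.sqrt_lt' hπ).mpr (by linarith)
  have hsa : 0 < Real.sin Γ₀ := Real.sin_pos_of_pos_of_lt_pi ha ha'
  have hpa : 0 < π ^ 2 - Γ₀ ^ 2 := by nlinarith
  -- positivity facts about the eigenvalue denominators
  have hkfacts : ∀ ℓ : ℕ, (1:ℝ) ≤ ((ℓ + 1 : ℕ) : ℝ) ∧
      Γ₀ ^ 2 < π ^ 2 * ((ℓ + 1 : ℕ) : ℝ) ^ 2 := by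
    intro ℓ
    have hk1 : (1:ℝ) ≤ ((ℓ + 1 : ℕ) : ℝ) := by
      exact_mod_cast Nat.one_le_iff_ne_zero.mpr (Nat.succ_ne_zero ℓ)
    have hk2 : (1:ℝ) ≤ ((ℓ + 1 : ℕ) : ℝ) ^ 2 := by nlinarith
    exact ⟨hk1, by nlinarith [mul_le_mul_of_nonneg_left hk2 (sq_nonneg π)]⟩
  have hlampos : ∀ ℓ : ℕ, 0 < lam (ℓ + 1) := by
    intro ℓ
    rw [hlam]
    exact mul_pos hϑ₂ (by linarith [(hkfacts ℓ).2])
  -- Summability of absolute values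
  have habs : Summable (fun ℓ : ℕ =>
      |σsq / lam (ℓ + 1) * Real.sin (π * (ℓ + 1) * x) * Real.sin (π * (ℓ + 1) * y)|) := by
    have hbase : Summable (fun ℓ : ℕ => σsq / (ϑ₂ * (π ^ 2 - Γ₀ ^ 2)) * (1 / ((ℓ + 1 : ℕ) : ℝ) ^ 2)) := by
      apply Summable.mul_left
      have h0 : Summable (fun n : ℕ => 1 / (n : ℝ) ^ 2) := summable_one_div_nat_pow.mpr one_lt_two
      have := (summable_nat_add_iff 1).mpr h0
      exact this.congr (fun n => by push_cast; ring)
    apply Summable.of_nonneg_of_le (fun _ => abs_nonneg _) _ hbase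
    intro ℓ
    set k : ℝ := ((ℓ + 1 : ℕ) : ℝ) with hkdef
    obtain ⟨hk1, hk2⟩ := hkfacts ℓ
    have hlp := hlampos ℓ
    have hsin1 : |Real.sin (π * (ℓ + 1) * x)| ≤ 1 :=
      abs_le.mpr ⟨Real.neg_one_le_sin _, Real.sin_le_one _⟩
    have hsin2 : |Real.sin (π * (ℓ + 1) * y)| ≤ 1 :=
      abs_le.mpr ⟨Real.neg_one_le_sin _, Real.sin_le_one _⟩
    calc |σsq / lam (ℓ + 1) * Real.sin (π * (ℓ + 1) * x) * Real.sin (π * (ℓ + 1) * y)|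
        = |σsq / lam (ℓ + 1)| * |Real.sin (π * (ℓ + 1) * x)| * |Real.sin (π * (ℓ + 1) * y)| := by
          rw [abs_mul, abs_mul]
      _ ≤ |σsq / lam (ℓ + 1)| * 1 * 1 := by gcongr
      _ = σsq / lam (ℓ + 1) := by
          rw [mul_one, mul_one, abs_of_pos (div_pos hσ hlp)]
      _ ≤ σsq / (ϑ₂ * (π ^ 2 - Γ₀ ^ 2)) * (1 / k ^ 2) := by
          have hkpos : (0:ℝ) < k ^ 2 := by positivity
          rw [hlam, mul_one_div,
            div_le_div_iff₀ (mul_pos hϑ₂ (by linarith : (0:ℝ) < π ^ 2 * ((ℓ + 1 : ℕ) : ℝ) ^ 2 - Γ₀ ^ 2)) hkpos,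
            div_mul_eq_mul_div, le_div_iff₀ (mul_pos hϑ₂ hpa)]
          have hk2' : (1:ℝ) ≤ k ^ 2 := by nlinarith
          nlinarith [mul_nonneg (mul_nonneg (mul_nonneg hσ.le hϑ₂.le) (sq_nonneg Γ₀))
            (by nlinarith : (0:ℝ) ≤ k ^ 2 - 1)]
  refine ⟨habs, ?_⟩
  -- the two cosine series
  have h1 := green_cos_hasSum Γ₀ ha ha' (y - x) (by linarith) (by linarith)
  have h2 := green_cos_hasSum Γ₀ ha ha' (y + x) (by linarith) (by linarith)
  have hcomb := (h1.sub h2).mul_left (σsq / (2 * ϑ₂))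
  have hfe : (fun ℓ : ℕ => σsq / (2 * ϑ₂) *
        (Real.cos (π * (ℓ + 1 : ℕ) * (y - x)) / (π ^ 2 * ((ℓ + 1 : ℕ) : ℝ) ^ 2 - Γ₀ ^ 2)
          - Real.cos (π * (ℓ + 1 : ℕ) * (y + x)) / (π ^ 2 * ((ℓ + 1 : ℕ) : ℝ) ^ 2 - Γ₀ ^ 2)))
      = fun ℓ : ℕ => σsq / lam (ℓ + 1) * Real.sin (π * (ℓ + 1) * x) * Real.sin (π * (ℓ + 1) * y) := by
    funext ℓ
    obtain ⟨hk1, hk2⟩ := hkfacts ℓ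
    rw [hlam]
    push_cast
    set k : ℝ := (ℓ : ℝ) + 1 with hkdef
    have hk1' : (1:ℝ) ≤ k := by
      rw [hkdef]; linarith [Nat.cast_nonneg (α := ℝ) ℓ]
    have hk2' : (1:ℝ) ≤ k ^ 2 := by nlinarith
    have hlt : Γ₀ ^ 2 < π ^ 2 * k ^ 2 := by
      nlinarith [mul_le_mul_of_nonneg_left hk2' (sq_nonneg π)]
    have hD : π ^ 2 * k ^ 2 - Γ₀ ^ 2 ≠ 0 := by linarith
    rw [div_sub_div_same, Real.cos_sub_cos,
      show (π * k * (y - x) + π * k * (y + x)) / 2 = π * k * y by ring,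
      show (π * k * (y - x) - π * k * (y + x)) / 2 = -(π * k * x) by ring,
      Real.sin_neg]
    field_simp
  rw [hfe] at hcomb
  have hval : σsq / (2 * ϑ₂) *
        ((1 / (2 * Γ₀ ^ 2) - Real.cos (Γ₀ * (1 - (y - x))) / (2 * Γ₀ * Real.sin Γ₀))
          - (1 / (2 * Γ₀ ^ 2) - Real.cos (Γ₀ * (1 - (y + x))) / (2 * Γ₀ * Real.sin Γ₀)))
      = σsq / (2 * ϑ₂) * (Real.sin (Γ₀ * x) * Real.sin (Γ₀ * (1 - y)) / (Γ₀ * Real.sin Γ₀)) := by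
    have key : Real.cos (Γ₀ * (1 - (y + x))) - Real.cos (Γ₀ * (1 - (y - x)))
        = 2 * Real.sin (Γ₀ * x) * Real.sin (Γ₀ * (1 - y)) := by
      rw [Real.cos_sub_cos,
        show (Γ₀ * (1 - (y + x)) + Γ₀ * (1 - (y - x))) / 2 = Γ₀ * (1 - y) by ring,
        show (Γ₀ * (1 - (y + x)) - Γ₀ * (1 - (y - x))) / 2 = -(Γ₀ * x) by ring,
        Real.sin_neg]
      ring
    calc σsq / (2 * ϑ₂) *
        ((1 / (2 * Γ₀ ^ 2) - Real.cos (Γ₀ * (1 - (y - x))) / (2 * Γ₀ * Real.sin Γ₀))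
          - (1 / (2 * Γ₀ ^ 2) - Real.cos (Γ₀ * (1 - (y + x))) / (2 * Γ₀ * Real.sin Γ₀)))
        = σsq / (2 * ϑ₂) * ((Real.cos (Γ₀ * (1 - (y + x))) - Real.cos (Γ₀ * (1 - (y - x))))
            / (2 * Γ₀ * Real.sin Γ₀)) := by ring
      _ = σsq / (2 * ϑ₂) * (Real.sin (Γ₀ * x) * Real.sin (Γ₀ * (1 - y)) / (Γ₀ * Real.sin Γ₀)) := by
          rw [key]
          have : Γ₀ * Real.sin Γ₀ ≠ 0 := by positivity
          field_simp
  rw [hval] at hcomb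
  exact hcomb.tsum_eq
end

section
/- Let q > 0, α > 1/2 and c > 0 be real constants. Let (N_n), (M_n), (L_n) be sequences of positive integers and (T_n) a sequence of positive reals, and set Δ_n = T_n / N_n. Assume T_n · Δ_n^q → 0 and L_n M_n Δ_n^α → ∞ as n → ∞. Then M_n · N_n · exp(−c · L_n² · M_n² · Δ_n) → 0 as n → ∞. -/
open Real Filter

lemma aux_pow_le_factorial_mul_exp (x : ℝ) (hx : 0 ≤ x) (m : ℕ) :
    x ^ m ≤ (Nat.factorial m : ℝ) * Real.exp x := by
  have h := Real.pow_div_factorial_le_exp x hx m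
  have hm : (0:ℝ) < (Nat.factorial m : ℝ) := by exact_mod_cast Nat.factorial_pos m
  calc x ^ m = (x ^ m / (Nat.factorial m : ℝ)) * (Nat.factorial m : ℝ) := by field_simp
    _ ≤ Real.exp x * (Nat.factorial m : ℝ) := mul_le_mul_of_nonneg_right h hm.le
    _ = (Nat.factorial m : ℝ) * Real.exp x := mul_comm _ _

/-- The pointwise estimate. -/
lemma aux_key (q α c : ℝ) (hq : 0 < q) (hα : 1 / 2 < α) (hc : 0 < c)
    (Lr Mr Nr Tr D a : ℝ) (hLr : 1 ≤ Lr) (hMr : 1 ≤ Mr) (hNr : 1 ≤ Nr) (hTr : 0 < Tr)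
    (hD : D = Tr / Nr) (hTq : Tr * D ^ q ≤ 1)
    (ha : a = Lr * Mr * D ^ α) (ha1 : 1 ≤ a) (hca : 2 ≤ c * a) (hca2 : 2 ≤ c * a ^ 2) :
    Mr * Nr * Real.exp (-c * Lr ^ 2 * Mr ^ 2 * D)
      ≤ (Nat.factorial ⌈(α + 1 + q) / (2 * α - 1)⌉₊ : ℝ) * (a * Real.exp (-a)) := by
  have hDpos : 0 < D := by rw [hD]; positivity
  have h2α : 0 < 2 * α - 1 := by linarith
  set p : ℝ := (α + 1 + q) / (2 * α - 1) with hp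
  have hppos : 0 < p := by positivity
  set m : ℕ := ⌈p⌉₊ with hm
  -- D ≤ 1
  have hD1 : D ≤ 1 := by
    by_contra h
    push_neg at h
    have hDq : 1 < D ^ q := (Real.one_lt_rpow_iff_of_pos hDpos).2 (Or.inl ⟨h, hq⟩)
    have hTD : D ≤ Tr := by
      rw [hD, div_le_iff₀ (by linarith : (0:ℝ) < Nr)]
      nlinarith [hTr.le]
    nlinarith
  -- x := D^(1-2α) ≥ 1
  set x : ℝ := D ^ (1 - 2 * α) with hx
  have hx1 : 1 ≤ x :=
    Real.one_le_rpow_of_pos_of_le_one_of_nonpos hDpos hD1 (by linarith)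
  have hxpos : 0 < x := lt_of_lt_of_le one_pos hx1
  have hapos : 0 < a := lt_of_lt_of_le one_pos ha1
  -- exponent identity
  have hED : Lr ^ 2 * Mr ^ 2 * D = a ^ 2 * x := by
    rw [ha, hx]
    have h1 : (D ^ α) ^ 2 = D ^ (2 * α) := by
      rw [← Real.rpow_natCast (D ^ α) 2, ← Real.rpow_mul hDpos.le]
      ring_nf
    have h2 : D ^ (2 * α) * D ^ (1 - 2 * α) = D := by
      rw [← Real.rpow_add hDpos]; norm_num
    calc Lr ^ 2 * Mr ^ 2 * D
        = Lr ^ 2 * Mr ^ 2 * (D ^ (2 * α) * D ^ (1 - 2 * α)) := by rw [h2]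
      _ = (Lr * Mr * D ^ α) ^ 2 * D ^ (1 - 2 * α) := by rw [mul_pow, mul_pow, h1]; ring
  -- Mr * Nr ≤ a * x ^ p
  have hDα : (0:ℝ) < D ^ α := Real.rpow_pos_of_pos hDpos α
  have hDq' : (0:ℝ) < D ^ q := Real.rpow_pos_of_pos hDpos q
  have hMN : Mr * Nr ≤ a * x ^ p := by
    have hNrT : Nr = Tr / D := by rw [hD]; field_simp
    have hxp : x ^ p = D ^ (-α) * (D ^ (-q) / D) := by
      rw [hx, ← Real.rpow_mul hDpos.le, div_eq_mul_inv, ← Real.rpow_neg_one D,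
        ← Real.rpow_add hDpos, ← Real.rpow_add hDpos]
      congr 1
      rw [hp]
      field_simp
      ring
    have hTle : Tr ≤ D ^ (-q) := by
      rw [Real.rpow_neg hDpos.le]
      calc Tr = Tr * D ^ q / D ^ q := by field_simp
        _ ≤ 1 / D ^ q := by gcongr
        _ = (D ^ q)⁻¹ := one_div _
    have hMle : Mr ≤ a * D ^ (-α) := by
      rw [ha, Real.rpow_neg hDpos.le]
      have h3 : Lr * Mr * D ^ α * (D ^ α)⁻¹ = Lr * Mr := by field_simp
      rw [h3]
      nlinarith
    have hNle : Nr ≤ D ^ (-q) / D := by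
      rw [hNrT]; gcongr
    rw [hxp, ← mul_assoc]
    exact mul_le_mul hMle hNle (by linarith) (by positivity)
  -- put things together
  have hEx : -c * Lr ^ 2 * Mr ^ 2 * D = -(c * a ^ 2 * x) := by
    linear_combination (-c) * hED
  have hE2x : x ≤ c * a ^ 2 * x / 2 := by nlinarith
  have hE2a : a ≤ c * a ^ 2 * x / 2 := by nlinarith
  have hxpm : x ^ p ≤ x ^ m := by
    rw [← Real.rpow_natCast x m]
    exact Real.rpow_le_rpow_of_exponent_le hx1 (Nat.le_ceil p)
  calc Mr * Nr * Real.exp (-c * Lr ^ 2 * Mr ^ 2 * D)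
      = Mr * Nr * (Real.exp (-(c * a ^ 2 * x / 2)) * Real.exp (-(c * a ^ 2 * x / 2))) := by
        rw [hEx, show -(c * a ^ 2 * x) = -(c * a ^ 2 * x / 2) + -(c * a ^ 2 * x / 2) by ring,
          Real.exp_add]
    _ ≤ (a * x ^ p) * (Real.exp (-(c * a ^ 2 * x / 2)) * Real.exp (-(c * a ^ 2 * x / 2))) :=
        mul_le_mul_of_nonneg_right hMN (by positivity)
    _ ≤ (a * x ^ m) * (Real.exp (-x) * Real.exp (-a)) := by
        refine mul_le_mul (mul_le_mul_of_nonneg_left hxpm hapos.le)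
          (mul_le_mul (Real.exp_le_exp.2 (by linarith)) (Real.exp_le_exp.2 (by linarith))
            (Real.exp_pos _).le (Real.exp_pos _).le) (by positivity) (by positivity)
    _ = (x ^ m * Real.exp (-x)) * (a * Real.exp (-a)) := by ring
    _ ≤ (Nat.factorial m : ℝ) * (a * Real.exp (-a)) := by
        refine mul_le_mul_of_nonneg_right ?_ (by positivity)
        calc x ^ m * Real.exp (-x)
            ≤ ((Nat.factorial m : ℝ) * Real.exp x) * Real.exp (-x) :=
              mul_le_mul_of_nonneg_right (aux_pow_le_factorial_mul_exp x hxpos.le m)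
                (Real.exp_pos _).le
          _ = (Nat.factorial m : ℝ) := by
              rw [mul_assoc, ← Real.exp_add]; simp

/-- Analytic content of part (ii) of the main theorem: if `T_n Δ_n^q → 0` and
`L_n M_n Δ_n^α → ∞` with `Δ_n = T_n / N_n`, `q > 0`, `α > 1/2`, `c > 0`, then
`M_n N_n exp(−c L_n² M_n² Δ_n) → 0`. -/
theorem replacement_tv_vanishes (q α c : ℝ) (hq : 0 < q) (hα : 1 / 2 < α) (hc : 0 < c)
    (N M L : ℕ → ℕ) (T : ℕ → ℝ) (Δ : ℕ → ℝ)
    (hN : ∀ n, 0 < N n) (hM : ∀ n, 0 < M n) (hL : ∀ n, 0 < L n) (hT : ∀ n, 0 < T n)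
    (hΔ : ∀ n, Δ n = T n / N n)
    (h₁ : Filter.Tendsto (fun n => T n * (Δ n) ^ q) Filter.atTop (nhds 0))
    (h₂ : Filter.Tendsto (fun n => (L n : ℝ) * (M n : ℝ) * (Δ n) ^ α)
            Filter.atTop Filter.atTop) :
    Filter.Tendsto
      (fun n => (M n : ℝ) * (N n : ℝ) *
        Real.exp (-c * (L n : ℝ) ^ 2 * (M n : ℝ) ^ 2 * Δ n))
      Filter.atTop (nhds 0) := by
  set m : ℕ := ⌈(α + 1 + q) / (2 * α - 1)⌉₊ with hm
  have hg : Tendsto (fun n => (Nat.factorial m : ℝ) *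
      ((L n : ℝ) * (M n : ℝ) * (Δ n) ^ α *
        Real.exp (-((L n : ℝ) * (M n : ℝ) * (Δ n) ^ α)))) atTop (nhds 0) := by
    have h0 : Tendsto (fun y : ℝ => y ^ 1 * Real.exp (-y)) atTop (nhds 0) :=
      Real.tendsto_pow_mul_exp_neg_atTop_nhds_zero 1
    have h0' : Tendsto (fun n => (L n : ℝ) * (M n : ℝ) * (Δ n) ^ α *
        Real.exp (-((L n : ℝ) * (M n : ℝ) * (Δ n) ^ α))) atTop (nhds 0) := by
      simpa [Function.comp_def] using h0.comp h₂
    simpa using h0'.const_mul (Nat.factorial m : ℝ)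
  refine squeeze_zero' ?_ ?_ hg
  · filter_upwards with n
    positivity
  · filter_upwards [h₁.eventually_le_const one_pos,
      h₂.eventually_ge_atTop (max 1 (2 / c))] with n h1 h2
    have ha1 : 1 ≤ (L n : ℝ) * (M n : ℝ) * (Δ n) ^ α := le_trans (le_max_left _ _) h2
    have hca : 2 ≤ c * ((L n : ℝ) * (M n : ℝ) * (Δ n) ^ α) := by
      have := le_trans (le_max_right _ _) h2
      rw [div_le_iff₀ hc] at this
      linarith [mul_comm c ((L n : ℝ) * (M n : ℝ) * (Δ n) ^ α)]
    have hca2 : 2 ≤ c * ((L n : ℝ) * (M n : ℝ) * (Δ n) ^ α) ^ 2 := by nlinarith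
    exact aux_key q α c hq hα hc (L n) (M n) (N n) (T n) (Δ n) _
      (by exact_mod_cast hL n) (by exact_mod_cast hM n) (by exact_mod_cast hN n) (hT n)
      (hΔ n) h1 rfl ha1 hca hca2
end
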